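/- Let ρ be a density matrix on ℂ^(2^L), let ψ ∈ ℂ^(2^L) ⊗ ℂ^(2^M) and φ ∈ ℂ^(2^L) ⊗ ℂ^(2^K) be purifications of ρ (unit vectors whose partial trace over the second factor equals ρ), each an eigenvector of the respective total parity operator P_L ⊗ P_M, resp. P_L ⊗ P_K. Then there exists a finite family {V_j} of 2^K × 2^M complex matrices with Σ_j V_jᴴ V_j = I_(2^M), each parity-homogeneous (for each j, P_K V_j = V_j P_M or P_K V_j = −V_j P_M), such that Σ_j (I_(2^L) ⊗ V_j) |ψ⟩⟨ψ| (I_(2^L) ⊗ V_j)ᴴ = |φ⟩⟨φ|. That is, any two definite-parity purifications of ρ are connected by a parity-respecting quantum channel on the purifying system. -/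
import Mathlib

open Matrix
open scoped Kronecker ComplexOrder

noncomputable section

/-- Bit strings of length `L`. -/
abbrev BitStr (L : ℕ) := Fin L → Fin 2

/-- The parity operator `P_L = Z^{⊗L}` on `ℂ^(2^L)`: the diagonal matrix with entries
`(−1)^(s₁+⋯+s_L)`. -/
def parityOp (L : ℕ) : Matrix (BitStr L) (BitStr L) ℂ :=
  Matrix.diagonal fun s => (-1 : ℂ) ^ (∑ i, (s i : ℕ))

/-- Partial trace over the second tensor factor. -/
def ptrace2 {α β : Type*} [Fintype β] (M : Matrix (α × β) (α × β) ℂ) : Matrix α α ℂ :=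
  Matrix.of fun i i' => ∑ j, M (i, j) (i', j)

/-- Moore-Penrose style pseudoinverse exists for a Hermitian complex matrix. -/
lemma exists_pinv {n : Type*} [Fintype n] [DecidableEq n] {ρ : Matrix n n ℂ}
    (h : ρ.IsHermitian) :
    ∃ g : Matrix n n ℂ, gᴴ = g ∧ ρ * g = g * ρ ∧ ρ * g * ρ = ρ ∧ g * ρ * g = g := by
  classical
  set U : Matrix n n ℂ := (h.eigenvectorUnitary : Matrix n n ℂ) with hUdef
  have hU1 : Uᴴ * U = 1 := by
    simpa [Matrix.star_eq_conjTranspose] using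
      Matrix.mem_unitaryGroup_iff'.mp h.eigenvectorUnitary.2
  set d : n → ℂ := fun i => (h.eigenvalues i : ℂ) with hd
  set dinv : n → ℂ := fun i => if h.eigenvalues i = 0 then 0 else (h.eigenvalues i : ℂ)⁻¹
    with hdinv
  have hspec : ρ = U * diagonal d * Uᴴ := by
    have := h.spectral_theorem
    rw [this]; rfl
  have key : ∀ a b c : n → ℂ, (∀ i, a i * b i = c i) →
      (U * diagonal a * Uᴴ) * (U * diagonal b * Uᴴ) = U * diagonal c * Uᴴ := by
    intro a b c hc
    calc (U * diagonal a * Uᴴ) * (U * diagonal b * Uᴴ)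
        = U * diagonal a * (Uᴴ * U) * (diagonal b * Uᴴ) := by
          simp only [Matrix.mul_assoc]
      _ = U * (diagonal a * diagonal b) * Uᴴ := by
          rw [hU1]; simp only [Matrix.mul_assoc, Matrix.one_mul]
      _ = U * diagonal c * Uᴴ := by
          rw [diagonal_mul_diagonal]
          congr 1
          · congr 1
            exact congrArg diagonal (funext fun i => hc i)
  have hcd : ∀ i, d i * dinv i = d i * dinv i := fun _ => rfl
  have hdd : ∀ i, (d i * dinv i) * d i = d i := by
    intro i
    by_cases hi : h.eigenvalues i = 0
    · simp [hd, hdinv, hi]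
    · have hne : (h.eigenvalues i : ℂ) ≠ 0 := Complex.ofReal_ne_zero.mpr hi
      simp [hd, hdinv, hi, mul_inv_cancel₀ hne]
  have hdd' : ∀ i, (d i * dinv i) * dinv i = dinv i := by
    intro i
    by_cases hi : h.eigenvalues i = 0
    · simp [hd, hdinv, hi]
    · have hne : (h.eigenvalues i : ℂ) ≠ 0 := Complex.ofReal_ne_zero.mpr hi
      simp [hd, hdinv, hi, mul_inv_cancel₀ hne]
  refine ⟨U * diagonal dinv * Uᴴ, ?_, ?_, ?_, ?_⟩
  · rw [conjTranspose_mul, conjTranspose_mul, conjTranspose_conjTranspose,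
      diagonal_conjTranspose]
    have hst : star dinv = dinv := by
      funext i
      by_cases hi : h.eigenvalues i = 0 <;>
        simp [hdinv, hi, Pi.star_apply, ← Complex.ofReal_inv]
    rw [hst, Matrix.mul_assoc]
  · rw [hspec, key d dinv (fun i => d i * dinv i) hcd,
      key dinv d (fun i => d i * dinv i) (fun i => mul_comm _ _)]
  · rw [hspec, key d dinv (fun i => d i * dinv i) hcd,
      key (fun i => d i * dinv i) d d hdd]
  · rw [hspec, key dinv d (fun i => d i * dinv i) (fun i => mul_comm _ _),
      key (fun i => d i * dinv i) dinv dinv hdd']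

/-- Uniqueness of the (commuting, Hermitian-product) pseudoinverse. -/
lemma pinv_unique {n : Type*} [Fintype n] [DecidableEq n] (A X Y : Matrix n n ℂ)
    (hX1 : A * X * A = A) (hX2 : X * A * X = X) (hX3 : A * X = X * A) (hX4 : (A * X)ᴴ = A * X)
    (hY1 : A * Y * A = A) (hY2 : Y * A * Y = Y) (hY3 : A * Y = Y * A) (hY4 : (A * Y)ᴴ = A * Y) :
    X = Y := by
  have h1 : A * X = (A * Y) * (A * X) := by
    conv_lhs => rw [← hY1]
    rw [Matrix.mul_assoc]
  have h2 : A * Y = (A * X) * (A * Y) := by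
    conv_lhs => rw [← hX1]
    rw [Matrix.mul_assoc]
  have hEF : A * X = A * Y := by
    calc A * X = (A * X)ᴴ := hX4.symm
      _ = ((A * Y) * (A * X))ᴴ := by rw [← h1]
      _ = (A * X)ᴴ * (A * Y)ᴴ := by rw [conjTranspose_mul]
      _ = (A * X) * (A * Y) := by rw [hX4, hY4]
      _ = A * Y := h2.symm
  calc X = X * A * X := hX2.symm
    _ = X * (A * X) := by rw [Matrix.mul_assoc]
    _ = X * (A * Y) := by rw [hEF]
    _ = (X * A) * Y := by rw [Matrix.mul_assoc]
    _ = (A * X) * Y := by rw [hX3]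
    _ = (A * Y) * Y := by rw [hEF]
    _ = (Y * A) * Y := by rw [hY3]
    _ = Y := hY2

/-- If `C Cᴴ = ρ` then the range-projection `ρ g` (with `g` a pseudoinverse) fixes `C`. -/
lemma range_absorb {n m : Type*} [Fintype n] [Fintype m] [DecidableEq n]
    (ρ g : Matrix n n ℂ) (C : Matrix n m ℂ) (hC : C * Cᴴ = ρ)
    (hgH : gᴴ = g) (hρH : ρᴴ = ρ) (h1 : ρ * g * ρ = ρ) :
    ρ * g * C = C := by
  have hconj : (ρ * g * C)ᴴ = Cᴴ * (g * ρ) := by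
    rw [conjTranspose_mul, conjTranspose_mul, hgH, hρH]
  have e1 : C * (Cᴴ * (g * ρ)) = ρ := by
    rw [← Matrix.mul_assoc, hC, ← Matrix.mul_assoc, h1]
  have e2 : ρ * g * C * Cᴴ = ρ := by
    rw [Matrix.mul_assoc (ρ * g) C Cᴴ, hC, h1]
  have e3 : ρ * g * C * (Cᴴ * (g * ρ)) = ρ := by
    rw [Matrix.mul_assoc (ρ * g) C (Cᴴ * (g * ρ)), ← Matrix.mul_assoc C Cᴴ (g * ρ), hC,
      ← Matrix.mul_assoc ρ g ρ, h1, h1]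
  have key : (C - ρ * g * C) * (C - ρ * g * C)ᴴ = 0 := by
    rw [conjTranspose_sub, hconj, Matrix.sub_mul, Matrix.mul_sub, Matrix.mul_sub,
      e1, e2, e3, hC]
    simp
  have h0 := Matrix.self_mul_conjTranspose_eq_zero.mp key
  rw [sub_eq_zero] at h0
  exact h0.symm

/-- Conjugating a pseudoinverse by a symmetry commuting with `ρ` gives it back. -/
lemma conj_pinv {n : Type*} [Fintype n] [DecidableEq n] (P ρ g : Matrix n n ℂ)
    (hP2 : P * P = 1) (hPH : Pᴴ = P) (hPρ : P * ρ = ρ * P) (hρH : ρᴴ = ρ)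
    (hgH : gᴴ = g) (hgc : ρ * g = g * ρ) (hg1 : ρ * g * ρ = ρ) (hg2 : g * ρ * g = g) :
    P * g * P = g := by
  have swap1 : ∀ X : Matrix n n ℂ, ρ * (P * X) = P * (ρ * X) := fun X => by
    rw [← Matrix.mul_assoc, ← hPρ, Matrix.mul_assoc]
  have swap2 : ∀ X : Matrix n n ℂ, P * (ρ * X) = ρ * (P * X) := fun X => (swap1 X).symm
  have cancelP : ∀ X : Matrix n n ℂ, P * (P * X) = X := fun X => by
    rw [← Matrix.mul_assoc, hP2, Matrix.one_mul]
  have hg4 : (ρ * g)ᴴ = ρ * g := by rw [conjTranspose_mul, hgH, hρH, hgc]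
  have c1 : ρ * (P * g * P) * ρ = ρ := by
    calc ρ * (P * g * P) * ρ = ρ * (P * (g * (P * ρ))) := by simp only [Matrix.mul_assoc]
      _ = ρ * (P * (g * (ρ * P))) := by rw [hPρ]
      _ = P * (ρ * (g * (ρ * P))) := swap1 _
      _ = P * (ρ * P) := by
          rw [show ρ * (g * (ρ * P)) = ρ * P from by
            rw [← Matrix.mul_assoc, ← Matrix.mul_assoc, hg1]]
      _ = ρ := by rw [← Matrix.mul_assoc, hPρ, Matrix.mul_assoc, hP2, Matrix.mul_one]
  have c3 : ρ * (P * g * P) = (P * g * P) * ρ := by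
    calc ρ * (P * g * P) = ρ * (P * (g * P)) := by simp only [Matrix.mul_assoc]
      _ = P * (ρ * (g * P)) := swap1 _
      _ = P * (g * (ρ * P)) := by rw [← Matrix.mul_assoc ρ g P, hgc, Matrix.mul_assoc]
      _ = P * (g * (P * ρ)) := by rw [← hPρ]
      _ = (P * g * P) * ρ := by simp only [Matrix.mul_assoc]
  have c2 : (P * g * P) * ρ * (P * g * P) = P * g * P := by
    calc (P * g * P) * ρ * (P * g * P)
        = P * (g * (P * (ρ * (P * (g * P))))) := by simp only [Matrix.mul_assoc]
      _ = P * (g * (ρ * (P * (P * (g * P))))) := by rw [swap2 (P * (g * P))]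
      _ = P * (g * (ρ * (g * P))) := by rw [cancelP (g * P)]
      _ = P * (g * P) := by
          rw [show g * (ρ * (g * P)) = g * P from by
            rw [← Matrix.mul_assoc, ← Matrix.mul_assoc, hg2]]
      _ = P * g * P := by rw [Matrix.mul_assoc]
  have c4 : (ρ * (P * g * P))ᴴ = ρ * (P * g * P) := by
    have : (ρ * (P * g * P))ᴴ = P * (g * P) * ρ := by
      rw [conjTranspose_mul, conjTranspose_mul, conjTranspose_mul, hgH, hPH, hρH,
        Matrix.mul_assoc]
    rw [this, ← Matrix.mul_assoc, ← c3]
  exact pinv_unique ρ (P * g * P) g c1 c2 c3 c4 hg1 hg2 hgc hg4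

lemma comm_of_conj {n : Type*} [Fintype n] [DecidableEq n] (P X : Matrix n n ℂ)
    (hP2 : P * P = 1) (h : P * X * P = X) : P * X = X * P := by
  calc P * X = P * X * (P * P) := by rw [hP2, Matrix.mul_one]
    _ = (P * X * P) * P := by simp only [Matrix.mul_assoc]
    _ = X * P := by rw [h]

lemma parityOp_mul_self (L : ℕ) : parityOp L * parityOp L = 1 := by
  rw [parityOp, diagonal_mul_diagonal, ← diagonal_one]
  exact congrArg diagonal (funext fun s => by
    rw [← pow_add]; exact Even.neg_one_pow ⟨_, rfl⟩)

lemma parityOp_conjTranspose (L : ℕ) : (parityOp L)ᴴ = parityOp L := by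
  rw [parityOp, diagonal_conjTranspose]
  exact congrArg diagonal (by funext s; simp)

lemma parityOp_transpose (L : ℕ) : (parityOp L)ᵀ = parityOp L := by
  rw [parityOp, diagonal_transpose]

lemma kron_one_mulVec {l m k : Type*} [Fintype l] [Fintype m] [DecidableEq l]
    (C : Matrix k m ℂ) (x : l × m → ℂ) (i : l) (j : k) :
    (((1 : Matrix l l ℂ) ⊗ₖ C) *ᵥ x) (i, j) = ∑ s, C j s * x (i, s) := by
  simp [Matrix.mulVec, dotProduct, Fintype.sum_prod_type, Matrix.one_apply,
    ite_mul, mul_ite, mul_assoc]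

lemma conj_vecMulVec {a b : Type*} [Fintype b] (N : Matrix a b ℂ) (x : b → ℂ) :
    N * vecMulVec x (star x) * Nᴴ = vecMulVec (N *ᵥ x) (star (N *ᵥ x)) := by
  ext i j
  simp only [mul_apply, vecMulVec_apply, conjTranspose_apply, mulVec, dotProduct,
    Pi.star_apply, Finset.sum_mul, Finset.mul_sum, star_sum, star_mul']
  exact Finset.sum_congr rfl fun k _ => Finset.sum_congr rfl fun b _ => by ring

/-- Any two definite-parity purifications of a density matrix `ρ` are connected by a
parity-respecting quantum channel on the purifying system. -/
theorem parity_channel_connecting_purifications (L M K : ℕ)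
    (ρ : Matrix (BitStr L) (BitStr L) ℂ) (hρ : ρ.PosSemidef) (htr : ρ.trace = 1)
    (ψ : BitStr L × BitStr M → ℂ) (φ : BitStr L × BitStr K → ℂ)
    (hψ1 : star ψ ⬝ᵥ ψ = 1) (hφ1 : star φ ⬝ᵥ φ = 1)
    (hψρ : ptrace2 (Matrix.vecMulVec ψ (star ψ)) = ρ)
    (hφρ : ptrace2 (Matrix.vecMulVec φ (star φ)) = ρ)
    (hψp : (parityOp L ⊗ₖ parityOp M).mulVec ψ = ψ ∨
           (parityOp L ⊗ₖ parityOp M).mulVec ψ = -ψ)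
    (hφp : (parityOp L ⊗ₖ parityOp K).mulVec φ = φ ∨
           (parityOp L ⊗ₖ parityOp K).mulVec φ = -φ) :
    ∃ (r : ℕ) (V : Fin r → Matrix (BitStr K) (BitStr M) ℂ),
      (∑ j, (V j)ᴴ * V j = 1) ∧
      (∀ j, parityOp K * V j = V j * parityOp M ∨
            parityOp K * V j = -(V j * parityOp M)) ∧
      ∑ j, ((1 : Matrix (BitStr L) (BitStr L) ℂ) ⊗ₖ V j) * Matrix.vecMulVec ψ (star ψ) *
          ((1 : Matrix (BitStr L) (BitStr L) ℂ) ⊗ₖ V j)ᴴ = Matrix.vecMulVec φ (star φ) := by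
  classical
  -- the purification matrices
  set A : Matrix (BitStr L) (BitStr M) ℂ := Matrix.of (fun i j => ψ (i, j)) with hAdef
  set B : Matrix (BitStr L) (BitStr K) ℂ := Matrix.of (fun i j => φ (i, j)) with hBdef
  have hA : A * Aᴴ = ρ := by
    rw [← hψρ]
    ext i i'
    simp [hAdef, mul_apply, conjTranspose_apply, ptrace2, Matrix.vecMulVec_apply]
  have hB : B * Bᴴ = ρ := by
    rw [← hφρ]
    ext i i'
    simp [hBdef, mul_apply, conjTranspose_apply, ptrace2, Matrix.vecMulVec_apply]
  -- parity hypotheses in matrix form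
  have hmv : ∀ (L' M' : ℕ) (x : BitStr L' × BitStr M' → ℂ)
      (C : Matrix (BitStr L') (BitStr M') ℂ) (ε : ℂ),
      (∀ i j, C i j = x (i, j)) → (parityOp L' ⊗ₖ parityOp M') *ᵥ x = ε • x →
      parityOp L' * C * parityOp M' = ε • C := by
    intro L' M' x C ε hC hx
    ext i j
    have h := congrFun hx (i, j)
    simp only [parityOp, diagonal_kronecker_diagonal, mulVec_diagonal, Pi.smul_apply,
      smul_eq_mul] at h
    simp only [parityOp]
    rw [Matrix.mul_diagonal, Matrix.diagonal_mul, Matrix.smul_apply, smul_eq_mul, hC i j]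
    calc (-1 : ℂ) ^ (∑ k, (i k : ℕ)) * x (i, j) * (-1 : ℂ) ^ (∑ k, (j k : ℕ))
        = (-1 : ℂ) ^ (∑ k, (i k : ℕ)) * (-1 : ℂ) ^ (∑ k, (j k : ℕ)) * x (i, j) := by ring
      _ = ε * x (i, j) := by rw [h]
  obtain ⟨εψ, hεψ, hψP⟩ : ∃ ε : ℂ, (ε = 1 ∨ ε = -1) ∧
      parityOp L * A * parityOp M = ε • A := by
    rcases hψp with h | h
    · exact ⟨1, Or.inl rfl, hmv _ _ ψ A 1 (fun i j => rfl) (by simpa using h)⟩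
    · exact ⟨-1, Or.inr rfl, hmv _ _ ψ A (-1) (fun i j => rfl)
        (by rw [h]; simp)⟩
  obtain ⟨εφ, hεφ, hφP⟩ : ∃ ε : ℂ, (ε = 1 ∨ ε = -1) ∧
      parityOp L * B * parityOp K = ε • B := by
    rcases hφp with h | h
    · exact ⟨1, Or.inl rfl, hmv _ _ φ B 1 (fun i j => rfl) (by simpa using h)⟩
    · exact ⟨-1, Or.inr rfl, hmv _ _ φ B (-1) (fun i j => rfl)
        (by rw [h]; simp)⟩
  have hεψs : star εψ = εψ := by rcases hεψ with rfl | rfl <;> simp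
  have hεψ2 : εψ * εψ = 1 := by rcases hεψ with rfl | rfl <;> simp
  have hεφs : star εφ = εφ := by rcases hεφ with rfl | rfl <;> simp
  -- pseudoinverse of ρ
  have hρH : ρᴴ = ρ := hρ.isHermitian
  obtain ⟨g, hgH, hgc, hg1, hg2⟩ := exists_pinv hρ.isHermitian
  have hρgA : ρ * g * A = A := range_absorb ρ g A hA hgH hρH hg1
  have hρgB : ρ * g * B = B := range_absorb ρ g B hB hgH hρH hg1
  -- transposed parity relations
  have hAH0 : parityOp M * (Aᴴ * parityOp L) = star εψ • Aᴴ := by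
    have h := congrArg conjTranspose hψP
    simpa only [conjTranspose_mul, parityOp_conjTranspose, Matrix.mul_assoc,
      conjTranspose_smul] using h
  have hAH : parityOp M * Aᴴ = star εψ • (Aᴴ * parityOp L) := by
    have h := congrArg (fun X => X * parityOp L) hAH0
    simpa only [Matrix.mul_assoc, parityOp_mul_self, Matrix.mul_one, Matrix.smul_mul] using h
  have hB' : parityOp L * B = εφ • (B * parityOp K) := by
    have h := congrArg (fun X => X * parityOp K) hφP
    simpa only [Matrix.mul_assoc, parityOp_mul_self, Matrix.mul_one, Matrix.smul_mul] using h
  have hA' : parityOp L * A = εψ • (A * parityOp M) := by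
    have h := congrArg (fun X => X * parityOp M) hψP
    simpa only [Matrix.mul_assoc, parityOp_mul_self, Matrix.mul_one, Matrix.smul_mul] using h
  -- ρ commutes with the parity operator
  have hPρ : parityOp L * ρ * parityOp L = ρ := by
    rw [← hA]
    have key : (parityOp L * A * parityOp M) * (parityOp M * (Aᴴ * parityOp L)) =
        parityOp L * (A * Aᴴ) * parityOp L := by
      calc (parityOp L * A * parityOp M) * (parityOp M * (Aᴴ * parityOp L))
          = parityOp L * (A * ((parityOp M * parityOp M) * (Aᴴ * parityOp L))) := by
            simp only [Matrix.mul_assoc]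
        _ = parityOp L * (A * (Aᴴ * parityOp L)) := by
            rw [parityOp_mul_self, Matrix.one_mul]
        _ = parityOp L * (A * Aᴴ) * parityOp L := by simp only [Matrix.mul_assoc]
    rw [← key, hψP, hAH0, Matrix.smul_mul, Matrix.mul_smul, smul_smul, hεψs, hεψ2, one_smul]
  have hPρc : parityOp L * ρ = ρ * parityOp L :=
    comm_of_conj _ _ (parityOp_mul_self L) hPρ
  have hPg : parityOp L * g * parityOp L = g :=
    conj_pinv _ _ _ (parityOp_mul_self L) (parityOp_conjTranspose L) hPρc hρH hgH hgc hg1 hg2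
  have hPgc : parityOp L * g = g * parityOp L :=
    comm_of_conj _ _ (parityOp_mul_self L) hPg
  -- the connecting partial isometry and associated projections
  set W : Matrix (BitStr M) (BitStr K) ℂ := Aᴴ * g * B with hWdef
  set Q : Matrix (BitStr M) (BitStr M) ℂ := Aᴴ * g * A with hQdef
  have hAW : A * W = B := by
    rw [hWdef, ← Matrix.mul_assoc, ← Matrix.mul_assoc, hA, hρgB]
  have hWH : Wᴴ = Bᴴ * (g * A) := by
    rw [hWdef, conjTranspose_mul, conjTranspose_mul, conjTranspose_conjTranspose, hgH]
  have hWWH : W * Wᴴ = Q := by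
    calc W * Wᴴ = Aᴴ * (g * (B * (Bᴴ * (g * A)))) := by
          rw [hWH, hWdef]; simp only [Matrix.mul_assoc]
      _ = Aᴴ * (g * (ρ * (g * A))) := by
          rw [show B * (Bᴴ * (g * A)) = ρ * (g * A) from by rw [← Matrix.mul_assoc, hB]]
      _ = Aᴴ * (g * A) := by
          rw [show g * (ρ * (g * A)) = g * A from by
            rw [← Matrix.mul_assoc, ← Matrix.mul_assoc, hg2]]
      _ = Q := by rw [hQdef, Matrix.mul_assoc]
  have hQQ : Q * Q = Q := by
    calc Q * Q = Aᴴ * (g * (A * (Aᴴ * (g * A)))) := by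
          rw [hQdef]; simp only [Matrix.mul_assoc]
      _ = Aᴴ * (g * (ρ * (g * A))) := by
          rw [show A * (Aᴴ * (g * A)) = ρ * (g * A) from by rw [← Matrix.mul_assoc, hA]]
      _ = Aᴴ * (g * A) := by
          rw [show g * (ρ * (g * A)) = g * A from by
            rw [← Matrix.mul_assoc, ← Matrix.mul_assoc, hg2]]
      _ = Q := by rw [hQdef, Matrix.mul_assoc]
  have hQH : Qᴴ = Q := by
    rw [hQdef, conjTranspose_mul, conjTranspose_mul, conjTranspose_conjTranspose, hgH,
      Matrix.mul_assoc]
  have hAQ : A * Q = A := by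
    rw [hQdef, ← Matrix.mul_assoc, ← Matrix.mul_assoc, hA, hρgA]
  -- parity of W and Q
  have hPW : parityOp M * W * parityOp K = (star εψ * εφ) • W := by
    calc parityOp M * W * parityOp K
        = (parityOp M * Aᴴ) * (g * (B * parityOp K)) := by
          rw [hWdef]; simp only [Matrix.mul_assoc]
      _ = (star εψ) • ((Aᴴ * parityOp L) * (g * (B * parityOp K))) := by
          rw [hAH, Matrix.smul_mul]
      _ = (star εψ) • (Aᴴ * ((parityOp L * g) * (B * parityOp K))) := by
          simp only [Matrix.mul_assoc]
      _ = (star εψ) • (Aᴴ * (g * ((parityOp L * B) * parityOp K))) := by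
          rw [hPgc]; simp only [Matrix.mul_assoc]
      _ = (star εψ) • (Aᴴ * (g * ((εφ • (B * parityOp K)) * parityOp K))) := by rw [hB']
      _ = (star εψ * εφ) • (Aᴴ * (g * (B * (parityOp K * parityOp K)))) := by
          simp only [Matrix.smul_mul, Matrix.mul_smul, smul_smul, Matrix.mul_assoc]
      _ = (star εψ * εφ) • W := by
          rw [parityOp_mul_self, Matrix.mul_one, hWdef, Matrix.mul_assoc]
  have hPQ : parityOp M * Q * parityOp M = Q := by
    calc parityOp M * Q * parityOp M
        = (parityOp M * Aᴴ) * (g * (A * parityOp M)) := by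
          rw [hQdef]; simp only [Matrix.mul_assoc]
      _ = (star εψ) • ((Aᴴ * parityOp L) * (g * (A * parityOp M))) := by
          rw [hAH, Matrix.smul_mul]
      _ = (star εψ) • (Aᴴ * (g * ((parityOp L * A) * parityOp M))) := by
          rw [Matrix.mul_assoc, ← Matrix.mul_assoc (parityOp L) g (A * parityOp M), hPgc]
          simp only [Matrix.mul_assoc]
      _ = (star εψ) • (Aᴴ * (g * ((εψ • (A * parityOp M)) * parityOp M))) := by rw [hA']
      _ = (star εψ * εψ) • (Aᴴ * (g * (A * (parityOp M * parityOp M)))) := by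
          simp only [Matrix.smul_mul, Matrix.mul_smul, smul_smul, Matrix.mul_assoc]
      _ = Q := by
          rw [parityOp_mul_self, Matrix.mul_one, hεψs, hεψ2, one_smul, hQdef, Matrix.mul_assoc]
  have hPQc : parityOp M * Q = Q * parityOp M :=
    comm_of_conj _ _ (parityOp_mul_self M) hPQ
  have hQt : Qᵀ * parityOp M = parityOp M * Qᵀ := by
    have h := congrArg transpose hPQc
    simpa only [Matrix.transpose_mul, parityOp_transpose] using h
  -- the complementary projection
  set R : Matrix (BitStr M) (BitStr M) ℂ := 1 - Qᵀ with hRdef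
  have hRP : R * parityOp M = parityOp M * R := by
    rw [hRdef, Matrix.sub_mul, Matrix.mul_sub, Matrix.one_mul, Matrix.mul_one, hQt]
  have hR2 : R * R = R := by
    have hQtQt : Qᵀ * Qᵀ = Qᵀ := by rw [← Matrix.transpose_mul, hQQ]
    rw [hRdef, Matrix.mul_sub, Matrix.sub_mul, Matrix.sub_mul, hQtQt]
    simp only [Matrix.one_mul, Matrix.mul_one]
    abel
  have hRH : Rᴴ = R := by
    have hQtH : (Qᵀ)ᴴ = (Qᴴ)ᵀ := by ext; simp
    rw [hRdef, conjTranspose_sub, hQtH, hQH]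
    simp
  -- the vacuum vector on the K register
  set e0 : BitStr K → ℂ := fun k => if k = (fun _ => 0) then 1 else 0 with he0
  have he0sum : ∀ (f : BitStr K → ℂ), ∑ k, star (e0 k) * (e0 k * f k) = f (fun _ => 0) := by
    intro f
    rw [Fintype.sum_eq_single (fun _ => (0 : Fin 2))]
    · simp [he0]
    · intro k hk; simp [he0, hk]
  -- the Kraus family
  set Vf : Option (BitStr M) → Matrix (BitStr K) (BitStr M) ℂ :=
    fun o => o.elim Wᵀ (fun s => vecMulVec e0 (R s)) with hVfdef
  set e : Option (BitStr M) ≃ Fin (Fintype.card (Option (BitStr M))) :=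
    Fintype.equivFin (Option (BitStr M)) with hedef
  refine ⟨Fintype.card (Option (BitStr M)), fun j => Vf (e.symm j), ?_, ?_, ?_⟩
  · -- trace preservation
    have hsum1 : ∑ j, (Vf (e.symm j))ᴴ * Vf (e.symm j) = ∑ o, (Vf o)ᴴ * Vf o :=
      Fintype.sum_equiv e.symm _ _ (fun j => rfl)
    rw [hsum1, univ_option, Finset.sum_insertNone]
    have h1 : (Vf none)ᴴ * Vf none = Qᵀ := by
      have ht : (Wᵀ)ᴴ = (Wᴴ)ᵀ := by ext; simp
      show (Wᵀ)ᴴ * Wᵀ = Qᵀ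
      rw [ht, ← Matrix.transpose_mul, hWWH]
    have hterm : ∀ s : BitStr M, (Vf (some s))ᴴ * Vf (some s) =
        Matrix.of (fun m m' => star (R s m) * R s m') := by
      intro s
      ext m m'
      show ∑ k, star (vecMulVec e0 (R s) k m) * vecMulVec e0 (R s) k m' = _
      have hz : ∀ k : BitStr K, k ≠ (fun _ => 0) →
          star (vecMulVec e0 (R s) k m) * vecMulVec e0 (R s) k m' = 0 := by
        intro k hk; simp [he0, hk, vecMulVec_apply]
      rw [Fintype.sum_eq_single ((fun _ => 0) : BitStr K) hz]
      simp [he0, vecMulVec_apply]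
    have h2 : ∑ s, (Vf (some s))ᴴ * Vf (some s) = R := by
      ext m m'
      rw [Matrix.sum_apply]
      simp only [hterm, Matrix.of_apply]
      have hRR : ∑ s, star (R s m) * R s m' = (Rᴴ * R) m m' := by
        rw [mul_apply]; simp only [conjTranspose_apply]
      rw [hRR, hRH, hR2]
    rw [h1, h2, hRdef]
    abel
  · -- parity homogeneity
    intro j
    rcases ho : e.symm j with _ | s
    · have hPV0 : parityOp K * (Wᵀ * parityOp M) = (star εψ * εφ) • Wᵀ := by
        have h := congrArg transpose hPW
        simpa only [Matrix.transpose_mul, parityOp_transpose, Matrix.transpose_smul,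
          Matrix.mul_assoc] using h
      have hPV : parityOp K * Wᵀ = (star εψ * εφ) • (Wᵀ * parityOp M) := by
        have h := congrArg (fun X => X * parityOp M) hPV0
        simpa only [Matrix.mul_assoc, parityOp_mul_self, Matrix.mul_one, Matrix.smul_mul] using h
      simp only [ho]
      show parityOp K * Wᵀ = Wᵀ * parityOp M ∨ parityOp K * Wᵀ = -(Wᵀ * parityOp M)
      rcases hεψ with h1 | h1 <;> rcases hεφ with h2 | h2 <;>
        rw [h1, h2] at hPV <;>
        simp only [star_one, star_neg, one_mul, mul_one, neg_mul, mul_neg, neg_neg,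
          one_smul, neg_smul] at hPV
      exacts [Or.inl hPV, Or.inr hPV, Or.inr hPV, Or.inl hPV]
    · simp only [ho]
      show parityOp K * vecMulVec e0 (R s) = vecMulVec e0 (R s) * parityOp M ∨
        parityOp K * vecMulVec e0 (R s) = -(vecMulVec e0 (R s) * parityOp M)
      have hPKVs : parityOp K * vecMulVec e0 (R s) = vecMulVec e0 (R s) := by
        ext k m
        simp only [parityOp]
        rw [Matrix.diagonal_mul]
        by_cases hk : k = (fun _ => 0)
        · subst hk; simp [he0]
        · simp [he0, hk, vecMulVec_apply]
      have hVsP : vecMulVec e0 (R s) * parityOp M =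
          ((-1 : ℂ) ^ (∑ i, (s i : ℕ))) • vecMulVec e0 (R s) := by
        ext k m
        have hRsm := Matrix.ext_iff.mpr hRP s m
        simp only [parityOp, Matrix.mul_diagonal, Matrix.diagonal_mul] at hRsm
        simp only [parityOp, Matrix.mul_diagonal, vecMulVec_apply, Matrix.smul_apply,
          smul_eq_mul]
        calc e0 k * R s m * (-1 : ℂ) ^ (∑ i, (m i : ℕ))
            = e0 k * (R s m * (-1 : ℂ) ^ (∑ i, (m i : ℕ))) := by ring
          _ = e0 k * ((-1 : ℂ) ^ (∑ i, (s i : ℕ)) * R s m) := by rw [hRsm]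
          _ = (-1 : ℂ) ^ (∑ i, (s i : ℕ)) * (e0 k * R s m) := by ring
      rcases Nat.even_or_odd (∑ i, (s i : ℕ)) with hev | hod
      · left
        rw [hPKVs, hVsP, hev.neg_one_pow, one_smul]
      · right
        rw [hPKVs, hVsP, hod.neg_one_pow]
        simp
  · -- the channel maps |ψ⟩⟨ψ| to |φ⟩⟨φ|
    have hsum3 : ∑ j, ((1 : Matrix (BitStr L) (BitStr L) ℂ) ⊗ₖ Vf (e.symm j)) *
        vecMulVec ψ (star ψ) * ((1 : Matrix (BitStr L) (BitStr L) ℂ) ⊗ₖ Vf (e.symm j))ᴴ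
        = ∑ o, ((1 : Matrix (BitStr L) (BitStr L) ℂ) ⊗ₖ Vf o) * vecMulVec ψ (star ψ) *
          ((1 : Matrix (BitStr L) (BitStr L) ℂ) ⊗ₖ Vf o)ᴴ :=
      Fintype.sum_equiv e.symm _ _ (fun j => rfl)
    rw [hsum3, univ_option, Finset.sum_insertNone]
    have hv0 : ((1 : Matrix (BitStr L) (BitStr L) ℂ) ⊗ₖ Wᵀ) *ᵥ ψ = φ := by
      funext p
      obtain ⟨i, k⟩ := p
      rw [kron_one_mulVec]
      have hBik := Matrix.ext_iff.mpr hAW i k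
      rw [mul_apply] at hBik
      calc ∑ s, Wᵀ k s * ψ (i, s) = ∑ s, A i s * W s k := by
            refine Finset.sum_congr rfl fun s _ => ?_
            rw [Matrix.transpose_apply]
            have hAis : A i s = ψ (i, s) := rfl
            rw [← hAis]; ring
        _ = B i k := hBik
        _ = φ (i, k) := rfl
    have hvs : ∀ s : BitStr M,
        ((1 : Matrix (BitStr L) (BitStr L) ℂ) ⊗ₖ vecMulVec e0 (R s)) *ᵥ ψ = 0 := by
      intro s
      funext p
      obtain ⟨i, k⟩ := p
      rw [kron_one_mulVec]
      have hAR : A * (1 - Q) = 0 := by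
        rw [Matrix.mul_sub, Matrix.mul_one, hAQ, sub_self]
      have h0 := Matrix.ext_iff.mpr hAR i s
      rw [mul_apply] at h0
      have hRsm : ∀ m, R s m = (1 - Q) m s := by
        intro m
        by_cases h : s = m
        · subst h; simp [hRdef, Matrix.sub_apply, Matrix.one_apply, Matrix.transpose_apply]
        · simp [hRdef, Matrix.sub_apply, Matrix.one_apply, h, Ne.symm h,
            Matrix.transpose_apply]
      have hterm : ∀ m, vecMulVec e0 (R s) k m * ψ (i, m) =
          e0 k * (A i m * (1 - Q) m s) := by
        intro m
        rw [vecMulVec_apply, hRsm m]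
        have hAim : A i m = ψ (i, m) := rfl
        rw [← hAim]; ring
      rw [Finset.sum_congr rfl (fun m _ => hterm m), ← Finset.mul_sum, h0]
      simp
    have hnone : ((1 : Matrix (BitStr L) (BitStr L) ℂ) ⊗ₖ Vf none) * vecMulVec ψ (star ψ) *
        ((1 : Matrix (BitStr L) (BitStr L) ℂ) ⊗ₖ Vf none)ᴴ = vecMulVec φ (star φ) := by
      have hVfnone : Vf none = Wᵀ := rfl
      rw [hVfnone, conj_vecMulVec, hv0]
    have hsome : ∀ s : BitStr M, ((1 : Matrix (BitStr L) (BitStr L) ℂ) ⊗ₖ Vf (some s)) *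
        vecMulVec ψ (star ψ) * ((1 : Matrix (BitStr L) (BitStr L) ℂ) ⊗ₖ Vf (some s))ᴴ = 0 := by
      intro s
      have hVfs : Vf (some s) = vecMulVec e0 (R s) := rfl
      rw [hVfs, conj_vecMulVec, hvs s]
      ext p p'
      simp [vecMulVec_apply]
    rw [hnone, Finset.sum_eq_zero (fun s _ => hsome s), add_zero]
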